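/- Let Γ_• = (Γ_1 ⇉ Γ_0) be a Lie groupoid whose differentiable cohomology vanishes in positive degrees (e.g. a proper Lie groupoid, in particular an action groupoid of a compact Lie group). Then the projection (c,h,ω) ↦ c induces an isomorphism from the second total cohomology of the double complex DC_1^•(Γ_•) to the second total cohomology H^2(Γ_•, ℤ) of the double complex of smooth singular integer cochains C_ℤ^•(Γ_•). -/

import Mathlib

open Manifold Finset
noncomputable section

/-- The `i`-th face embedding of the standard `n`-simplex into the standard `n+1`-simplex,
as a linear map (insertion of `0` at the `i`-th vertex coordinate). -/
def faceLM (n : ℕ) (i : Fin (n + 2)) : (Fin (n + 1) → ℝ) →ₗ[ℝ] (Fin (n + 2) → ℝ) where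
  toFun x j := ∑ k, if i.succAbove k = j then x k else 0
  map_add' x y := by
    funext j
    show (∑ k, if i.succAbove k = j then (x k + y k) else 0) =
      (∑ k, if i.succAbove k = j then x k else 0) + (∑ k, if i.succAbove k = j then y k else 0)
    rw [← Finset.sum_add_distrib]
    exact Finset.sum_congr rfl fun k _ => by split <;> simp
  map_smul' c x := by
    funext j
    show (∑ k, if i.succAbove k = j then (c * x k) else 0) =
      c * ∑ k, if i.succAbove k = j then x k else 0
    rw [Finset.mul_sum]
    exact Finset.sum_congr rfl fun k _ => by split <;> simp

lemma faceLM_apply (n : ℕ) (i : Fin (n + 2)) (x : Fin (n + 1) → ℝ) (j : Fin (n + 2)) :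
    faceLM n i x j = ∑ k, if i.succAbove k = j then x k else 0 := rfl

lemma faceLM_mapsTo (n : ℕ) (i : Fin (n + 2)) :
    Set.MapsTo (faceLM n i) (stdSimplex ℝ (Fin (n + 1))) (stdSimplex ℝ (Fin (n + 2))) := by
  intro x hx
  obtain ⟨hx0, hx1⟩ := hx
  constructor
  · intro j
    rw [faceLM_apply]
    refine Finset.sum_nonneg fun k _ => ?_
    split
    · exact hx0 k
    · exact le_refl 0
  · calc ∑ j, faceLM n i x j
        = ∑ j, ∑ k, (if i.succAbove k = j then x k else 0) :=
          Finset.sum_congr rfl fun j _ => faceLM_apply n i x j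
      _ = ∑ k, ∑ j, (if i.succAbove k = j then x k else 0) := Finset.sum_comm
      _ = ∑ k, x k := Finset.sum_congr rfl fun k _ => by simp [Finset.sum_ite_eq]
      _ = 1 := hx1

variable {E : Type} [NormedAddCommGroup E] [NormedSpace ℝ E]
  {H : Type} [TopologicalSpace H] (I : ModelWithCorners ℝ E H)
  (M : Type) [TopologicalSpace M] [ChartedSpace H M]

/-- A smooth singular `n`-simplex in a manifold `M`. -/
structure SSimplex (n : ℕ) where
  toFun : (Fin (n + 1) → ℝ) → M
  smooth : ContMDiffOn 𝓘(ℝ, Fin (n + 1) → ℝ) I (⊤ : ℕ∞) toFun (stdSimplex ℝ (Fin (n + 1)))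

variable {I M}

/-- The `i`-th face of a smooth singular simplex. -/
def SSimplex.face {n : ℕ} (σ : SSimplex I M (n + 1)) (i : Fin (n + 2)) : SSimplex I M n where
  toFun := σ.toFun ∘ (faceLM n i)
  smooth := by
    have h1 : ContMDiff 𝓘(ℝ, Fin (n+1) → ℝ) 𝓘(ℝ, Fin (n+2) → ℝ) (⊤ : ℕ∞) ⇑(faceLM n i) := by
      rw [← LinearMap.coe_toContinuousLinearMap' (faceLM n i)]
      exact (ContinuousLinearMap.contDiff _).contMDiff
    exact σ.smooth.comp h1.contMDiffOn (faceLM_mapsTo n i)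

variable (I M)

/-- Smooth singular chains. -/
def SChain (n : ℕ) : Type := FreeAbelianGroup (SSimplex I M n)

instance (n : ℕ) : AddCommGroup (SChain I M n) :=
  inferInstanceAs (AddCommGroup (FreeAbelianGroup (SSimplex I M n)))

/-- The boundary operator on smooth singular chains. -/
def sbd (n : ℕ) : SChain I M (n + 1) →+ SChain I M n :=
  ∑ i : Fin (n + 2), (-1 : ℤ) ^ (i : ℕ) • FreeAbelianGroup.map (fun σ => σ.face i)

variable (R : Type) [AddCommGroup R]

/-- Smooth singular cochains with coefficients in `R`. -/
def SCochain (n : ℕ) : Type := SSimplex I M n → R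

instance (n : ℕ) : AddCommGroup (SCochain I M R n) :=
  inferInstanceAs (AddCommGroup (SSimplex I M n → R))

/-- The coboundary on smooth singular cochains. -/
def scd (n : ℕ) : SCochain I M R n →+ SCochain I M R (n + 1) :=
  AddMonoidHom.mk' (fun c σ => ∑ i : Fin (n + 2), (-1 : ℤ) ^ (i : ℕ) • c (σ.face i))
    (by
      intro c c'
      funext σ
      show ∑ i : Fin (n + 2), (-1 : ℤ) ^ (i : ℕ) • (c (σ.face i) + c' (σ.face i)) =
        (∑ i : Fin (n + 2), (-1 : ℤ) ^ (i : ℕ) • c (σ.face i)) +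
          ∑ i : Fin (n + 2), (-1 : ℤ) ^ (i : ℕ) • c' (σ.face i)
      simp [smul_add, Finset.sum_add_distrib])

/-- Pairing of a cochain with a chain (evaluation / integration). -/
def pairC {n : ℕ} (c : SCochain I M R n) : SChain I M n →+ R :=
  FreeAbelianGroup.lift c

lemma pairC_add {n : ℕ} (c c' : SCochain I M R n) (x : SChain I M n) :
    pairC I M R (c + c') x = pairC I M R c x + pairC I M R c' x := by
  show FreeAbelianGroup.lift (c + c' : SSimplex I M n → R) x = FreeAbelianGroup.lift c x + FreeAbelianGroup.lift c' x
  refine FreeAbelianGroup.induction_on x (by simp) (fun σ => ?_) (fun y hy => ?_) ?_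
  · exact (FreeAbelianGroup.lift_apply_of (c + c') σ).trans
      (congrArg₂ (· + ·) (FreeAbelianGroup.lift_apply_of c σ)
        (FreeAbelianGroup.lift_apply_of c' σ)).symm
  · simp only [map_neg, hy]; abel
  · intro y z hy hz
    simp only [map_add, hy, hz]; abel

/-- The coefficient map `ℤ → ℝ` on cochains. -/
def intToReal (n : ℕ) : SCochain I M ℤ n →+ SCochain I M ℝ n :=
  AddMonoidHom.mk' (fun c σ => ((c σ : ℤ) : ℝ))
    (by
      intro c c'
      funext σ
      show ((c σ + c' σ : ℤ) : ℝ) = ((c σ : ℤ) : ℝ) + ((c' σ : ℤ) : ℝ)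
      push_cast
      ring)

/-- Degree `n-1` part (with the convention that it is trivial for `n = 0`):
this hosts the middle ("real cochain") component of the Hopkins–Singer complex. -/
def hCompT : ℕ → Type
  | 0 => PUnit
  | (m + 1) => SCochain I M ℝ m

instance : ∀ n, AddCommGroup (hCompT I M n)
  | 0 => inferInstanceAs (AddCommGroup PUnit)
  | (m + 1) => inferInstanceAs (AddCommGroup (SCochain I M ℝ m))

/-- Differential from the `(n-1)`-st level into degree `n`. -/
def hd : ∀ n, hCompT I M n →+ SCochain I M ℝ n
  | 0 => 0
  | (m + 1) => scd I M ℝ m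

variable (Ω : ∀ n : ℕ, AddSubgroup (SCochain I M ℝ n))

/-- The Hopkins–Singer group `DC_s^n(M)`: triples `(c, h, ω)` of an integral `n`-cochain,
a real `(n-1)`-cochain and a differential form `ω` (an element of the de Rham subcomplex
`Ω ⊆ C^•_ℝ`, forms being viewed as real cochains by integration), where `ω = 0` if `n < s`. -/
def DCgrp (s n : ℕ) :
    AddSubgroup (SCochain I M ℤ n × hCompT I M n × SCochain I M ℝ n) where
  carrier := {x | x.2.2 ∈ Ω n ∧ (n < s → x.2.2 = 0)}
  zero_mem' := ⟨(Ω n).zero_mem, fun _ => rfl⟩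
  add_mem' := by
    rintro a b ⟨ha, ha'⟩ ⟨hb, hb'⟩
    exact ⟨(Ω n).add_mem ha hb, fun h => by
      show a.2.2 + b.2.2 = 0
      rw [ha' h, hb' h, add_zero]⟩
  neg_mem' := by
    rintro a ⟨ha, ha'⟩
    refine ⟨(Ω n).neg_mem ha, fun h => ?_⟩
    show -a.2.2 = 0
    rw [ha' h, neg_zero]

/-- The Hopkins–Singer differential `d(c,h,ω) = (dc, ω - c - dh, dω)`. -/
def dDC (hΩ : ∀ n x, x ∈ Ω n → scd I M ℝ n x ∈ Ω (n + 1)) (s n : ℕ) :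
    (DCgrp I M Ω s n) →+ (DCgrp I M Ω s (n + 1)) :=
  AddMonoidHom.mk'
    (fun x => ⟨(scd I M ℤ n x.1.1,
        x.1.2.2 - intToReal I M n x.1.1 - hd I M n x.1.2.1,
        scd I M ℝ n x.1.2.2),
      ⟨hΩ n _ x.2.1, fun h => by
        rw [x.2.2 (Nat.lt_of_succ_lt h)]; exact map_zero _⟩⟩)
    (by
      intro x y
      apply Subtype.ext
      simp only [AddSubgroup.coe_add, Prod.fst_add, Prod.snd_add, map_add, Prod.mk_add_mk,
        Prod.mk.injEq]
      refine ⟨trivial, Prod.ext ?_ rfl⟩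
      simp only [Prod.fst_add]
      abel)

/-- Cohomology at the middle spot of a two-step complex `A → B → C`. -/
def Hq {A B C : Type*} [AddCommGroup A] [AddCommGroup B] [AddCommGroup C]
    (f : A →+ B) (g : B →+ C) : Type _ :=
  g.ker ⧸ ((f.range).addSubgroupOf g.ker)

instance {A B C : Type*} [AddCommGroup A] [AddCommGroup B] [AddCommGroup C]
    (f : A →+ B) (g : B →+ C) : AddCommGroup (Hq f g) :=
  inferInstanceAs (AddCommGroup (_ ⧸ _))

/-- Class of a cocycle in `Hq`. -/
def HqMk {A B C : Type*} [AddCommGroup A] [AddCommGroup B] [AddCommGroup C]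
    (f : A →+ B) (g : B →+ C) (b : B) (hb : b ∈ g.ker) : Hq f g :=
  QuotientAddGroup.mk (⟨b, hb⟩ : g.ker)

/-- Cycles (with the convention `Z_0 = C_0`, everything). -/
def Zcyc : ∀ n : ℕ, AddSubgroup (SChain I M n)
  | 0 => ⊤
  | (m + 1) => (sbd I M m).ker

section Pull

variable {E : Type} [NormedAddCommGroup E] [NormedSpace ℝ E] {H : Type} [TopologicalSpace H]
  (I : ModelWithCorners ℝ E H) (M : Type) [TopologicalSpace M] [ChartedSpace H M]
  {E' : Type} [NormedAddCommGroup E'] [NormedSpace ℝ E'] {H' : Type} [TopologicalSpace H']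
  (J : ModelWithCorners ℝ E' H') (N : Type) [TopologicalSpace N] [ChartedSpace H' N]
  (R : Type) [AddCommGroup R]

/-- Pushforward of a smooth simplex along a smooth map `f : M → N`. -/
def pushSS (f : M → N) (hf : ContMDiff I J (⊤ : ℕ∞) f) {n : ℕ} (σ : SSimplex I M n) :
    SSimplex J N n :=
  ⟨f ∘ σ.toFun, hf.comp_contMDiffOn σ.smooth⟩

/-- Pullback of cochains along a smooth map `f : M → N`. -/
def pullSC (f : M → N) (hf : ContMDiff I J (⊤ : ℕ∞) f) (n : ℕ) :
    SCochain J N R n →+ SCochain I M R n :=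
  AddMonoidHom.mk' (fun c σ => c (pushSS I M J N f hf σ)) (fun _ _ => rfl)

end Pull

section PullT

variable {E : Type} [NormedAddCommGroup E] [NormedSpace ℝ E] {H : Type} [TopologicalSpace H]
  (I : ModelWithCorners ℝ E H) (M : Type) [TopologicalSpace M] [ChartedSpace H M]
  {E' : Type} [NormedAddCommGroup E'] [NormedSpace ℝ E'] {H' : Type} [TopologicalSpace H']
  (J : ModelWithCorners ℝ E' H') (N : Type) [TopologicalSpace N] [ChartedSpace H' N]

/-- Pullback on the `(n-1)`-st level component. -/
def pullH (f : M → N) (hf : ContMDiff I J (⊤ : ℕ∞) f) : ∀ n, hCompT J N n →+ hCompT I M n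
  | 0 => 0
  | (m + 1) => pullSC I M J N ℝ f hf m

/-- Pullback on triples `(c, h, ω)` (the ambient group of the Hopkins–Singer groups). -/
def pullT (f : M → N) (hf : ContMDiff I J (⊤ : ℕ∞) f) (n : ℕ) :
    (SCochain J N ℤ n × hCompT J N n × SCochain J N ℝ n) →+
      (SCochain I M ℤ n × hCompT I M n × SCochain I M ℝ n) :=
  AddMonoidHom.mk'
    (fun t => (pullSC I M J N ℤ f hf n t.1, pullH I M J N f hf n t.2.1,
      pullSC I M J N ℝ f hf n t.2.2))
    (by
      intro a b
      simp only [Prod.fst_add, Prod.snd_add, map_add, Prod.mk_add_mk])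

end PullT
section Infra

lemma val_succAbove {m : ℕ} (p : Fin (m+1)) (t : Fin m) :
    ((p.succAbove t) : ℕ) = if (t:ℕ) < (p:ℕ) then (t:ℕ) else (t:ℕ)+1 := by
  rw [Fin.succAbove]
  split_ifs with h1 h2 h3 <;>
    simp_all [Fin.lt_def] <;> omega

lemma succAbove_succAbove_of_le {n : ℕ} {i j : Fin (n+2)} (H : i ≤ j) (k : Fin (n+1)) :
    j.succ.succAbove (i.succAbove k) = i.castSucc.succAbove (j.succAbove k) := by
  apply Fin.ext
  rw [val_succAbove, val_succAbove, val_succAbove, val_succAbove]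
  simp only [Fin.val_succ, Fin.coe_castSucc]
  rw [Fin.le_def] at H
  split_ifs <;> omega

lemma faceLM_faceLM {n : ℕ} (a : Fin (n+3)) (b : Fin (n+2)) (x : Fin (n+1) → ℝ) :
    faceLM (n+1) a (faceLM n b x) =
      fun m => ∑ l, if a.succAbove (b.succAbove l) = m then x l else 0 := by
  funext m
  rw [faceLM_apply]
  have h1 : ∀ k : Fin (n+2), (if a.succAbove k = m then faceLM n b x k else 0)
      = ∑ l, if b.succAbove l = k then (if a.succAbove k = m then x l else 0) else 0 := by
    intro k
    rw [faceLM_apply]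
    split
    · exact Finset.sum_congr rfl fun l _ => by split <;> simp [*]
    · simp
  rw [Finset.sum_congr rfl fun k _ => h1 k, Finset.sum_comm]
  refine Finset.sum_congr rfl fun l _ => ?_
  rw [Finset.sum_eq_single (b.succAbove l)]
  · simp
  · intro k _ hk
    simp [Ne.symm hk]
  · simp

variable {E : Type} [NormedAddCommGroup E] [NormedSpace ℝ E]
  {H : Type} [TopologicalSpace H] {I : ModelWithCorners ℝ E H}
  {M : Type} [TopologicalSpace M] [ChartedSpace H M]

lemma SSimplex.ext' {n : ℕ} {σ τ : SSimplex I M n} (h : σ.toFun = τ.toFun) : σ = τ := by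
  cases σ; cases τ; cases h; rfl

lemma face_face {n : ℕ} (σ : SSimplex I M (n+2)) {i j : Fin (n+2)} (H : i ≤ j) :
    (σ.face j.succ).face i = (σ.face i.castSucc).face j := by
  apply SSimplex.ext'
  funext x
  show σ.toFun (faceLM (n+1) j.succ (faceLM n i x)) =
    σ.toFun (faceLM (n+1) i.castSucc (faceLM n j x))
  congr 1
  rw [faceLM_faceLM, faceLM_faceLM]
  funext m
  exact Finset.sum_congr rfl fun l _ => by rw [succAbove_succAbove_of_le H l]

variable {R : Type} [AddCommGroup R]

lemma pair_cancel (x : R) (s t : ℕ) (h : t = s + 1) :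
    (-1:ℤ)^s • x + (-1:ℤ)^t • x = 0 := by
  rw [h, pow_succ, ← add_smul]
  norm_num

lemma scd_apply (n : ℕ) (c : SCochain I M R n) (σ : SSimplex I M (n+1)) :
    scd I M R n c σ = ∑ i : Fin (n + 2), (-1 : ℤ) ^ (i : ℕ) • c (σ.face i) := rfl



lemma scd_scd (n : ℕ) (c : SCochain I M R n) :
    scd I M R (n+1) (scd I M R n c) = 0 := by
  funext σ
  show ∑ a : Fin (n+3), (-1:ℤ)^(a:ℕ) • (scd I M R n c) (σ.face a) = 0
  have h1 : ∀ a : Fin (n+3), (-1:ℤ)^(a:ℕ) • (scd I M R n c) (σ.face a)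
      = ∑ b : Fin (n+2), ((-1:ℤ)^((a:ℕ)+(b:ℕ))) • c ((σ.face a).face b) := by
    intro a
    rw [scd_apply, Finset.smul_sum]
    exact Finset.sum_congr rfl fun b _ => by rw [smul_smul, ← pow_add]
  rw [Finset.sum_congr rfl fun a _ => h1 a, ← Finset.sum_product']
  have key : ∀ (a : Fin (n+3)) (b : Fin (n+2)) (a' : Fin (n+3)) (b' : Fin (n+2)),
      (a':ℕ) = (b:ℕ)+1 → (b':ℕ) = (a:ℕ) → (a:ℕ) ≤ (b:ℕ) →
      ((-1:ℤ)^((a:ℕ)+(b:ℕ))) • c ((σ.face a).face b) +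
        ((-1:ℤ)^((a':ℕ)+(b':ℕ))) • c ((σ.face a').face b') = 0 := by
    intro a b a' b' ha' hb' hab
    have hbound : (a:ℕ) < n + 2 := by omega
    have e1 : a' = b.succ := Fin.ext (by rw [ha', Fin.val_succ])
    have e2 : b' = ⟨(a:ℕ), hbound⟩ := Fin.ext hb'
    subst e1 e2
    have hh : (σ.face b.succ).face ⟨(a:ℕ), hbound⟩ = (σ.face a).face b := by
      refine (face_face σ (i := ⟨(a:ℕ), hbound⟩) (j := b)
        (by rw [Fin.le_def]; exact hab)).trans ?_
      exact congrArg (fun t : Fin (n+3) => (σ.face t).face b) (Fin.ext rfl)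
    rw [hh]
    exact pair_cancel _ _ _ (by rw [Fin.val_succ]; omega)
  apply Finset.sum_ninvolution
    (g := fun p : Fin (n+3) × Fin (n+2) => if h : (p.1 : ℕ) ≤ (p.2 : ℕ)
      then (p.2.succ, ⟨(p.1:ℕ), by omega⟩)
      else (⟨(p.2:ℕ), by omega⟩, ⟨(p.1:ℕ) - 1, by omega⟩))
  · rintro ⟨a, b⟩
    dsimp only
    by_cases hab : (a : ℕ) ≤ (b : ℕ)
    · rw [dif_pos hab]
      exact key a b _ _ (by rw [Fin.val_succ]) rfl hab
    · rw [dif_neg hab]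
      push_neg at hab
      rw [add_comm]
      exact key _ _ a b (by simp only [Fin.val_mk]; omega) rfl (by simp only [Fin.val_mk]; omega)
  · rintro ⟨a, b⟩ _
    intro hh
    rw [Prod.ext_iff] at hh
    obtain ⟨hh1, hh2⟩ := hh
    by_cases hab : (a : ℕ) ≤ (b : ℕ)
    · rw [dif_pos hab] at hh1 hh2
      have := congrArg Fin.val hh1
      simp only [Fin.val_succ] at this
      omega
    · rw [dif_neg hab] at hh1 hh2
      push_neg at hab
      have := congrArg Fin.val hh1
      simp only [Fin.val_mk] at this
      omega
  · intro p; exact Finset.mem_univ _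
  · rintro ⟨a, b⟩
    by_cases hab : (a : ℕ) ≤ (b : ℕ)
    · rw [dif_pos hab]
      have h2 : ¬ (((b.succ : Fin (n+3)) : ℕ) ≤ ((⟨(a:ℕ), by omega⟩ : Fin (n+2)) : ℕ)) := by
        simp only [Fin.val_succ, Fin.val_mk]; omega
      rw [dif_neg h2]
      refine Prod.ext (Fin.ext ?_) (Fin.ext ?_) <;>
        simp only [Fin.val_succ, Fin.val_mk] <;> omega
    · rw [dif_neg hab]
      push_neg at hab
      have h2 : (((⟨(b:ℕ), by omega⟩ : Fin (n+3)) : ℕ) ≤ ((⟨(a:ℕ) - 1, by omega⟩ : Fin (n+2)) : ℕ)) := by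
        simp only [Fin.val_mk]; omega
      rw [dif_pos h2]
      refine Prod.ext (Fin.ext ?_) (Fin.ext ?_) <;>
        simp only [Fin.val_succ, Fin.val_mk] <;> omega

end Infra
section Infra2

variable {E : Type} [NormedAddCommGroup E] [NormedSpace ℝ E] {H : Type} [TopologicalSpace H]
  {I : ModelWithCorners ℝ E H} {M : Type} [TopologicalSpace M] [ChartedSpace H M]
  {E' : Type} [NormedAddCommGroup E'] [NormedSpace ℝ E'] {H' : Type} [TopologicalSpace H']
  {J : ModelWithCorners ℝ E' H'} {N : Type} [TopologicalSpace N] [ChartedSpace H' N]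
  {E'' : Type} [NormedAddCommGroup E''] [NormedSpace ℝ E''] {H'' : Type} [TopologicalSpace H'']
  {K : ModelWithCorners ℝ E'' H''} {P : Type} [TopologicalSpace P] [ChartedSpace H'' P]
  {R : Type} [AddCommGroup R]

lemma pullSC_apply (f : M → N) (hf : ContMDiff I J (⊤ : ℕ∞) f) (n : ℕ) (c : SCochain J N R n)
    (σ : SSimplex I M n) :
    pullSC I M J N R f hf n c σ = c (pushSS I M J N f hf σ) := rfl

lemma pushSS_face (f : M → N) (hf : ContMDiff I J (⊤ : ℕ∞) f) {n : ℕ} (σ : SSimplex I M (n+1))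
    (i : Fin (n+2)) :
    (pushSS I M J N f hf σ).face i = pushSS I M J N f hf (σ.face i) := rfl

lemma pullSC_scd (f : M → N) (hf : ContMDiff I J (⊤ : ℕ∞) f) (n : ℕ) (c : SCochain J N R n) :
    scd I M R n (pullSC I M J N R f hf n c) = pullSC I M J N R f hf (n+1) (scd J N R n c) := by
  funext σ
  rw [pullSC_apply, scd_apply, scd_apply]
  exact Finset.sum_congr rfl fun i _ => by rw [pullSC_apply, pushSS_face]

lemma intToReal_apply (n : ℕ) (c : SCochain I M ℤ n) (σ : SSimplex I M n) :
    intToReal I M n c σ = ((c σ : ℤ) : ℝ) := rfl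

lemma intToReal_scd (n : ℕ) (c : SCochain I M ℤ n) :
    intToReal I M (n+1) (scd I M ℤ n c) = scd I M ℝ n (intToReal I M n c) := by
  funext σ
  rw [intToReal_apply, scd_apply, scd_apply]
  push_cast [zsmul_eq_mul]
  exact Finset.sum_congr rfl fun i _ => by rw [intToReal_apply]

lemma intToReal_pullSC (f : M → N) (hf : ContMDiff I J (⊤ : ℕ∞) f) (n : ℕ) (c : SCochain J N ℤ n) :
    pullSC I M J N ℝ f hf n (intToReal J N n c) = intToReal I M n (pullSC I M J N ℤ f hf n c) :=
  rfl

lemma pullSC_pullSC_congr (f f' : M → N) (hf : ContMDiff I J (⊤ : ℕ∞) f) (hf' : ContMDiff I J (⊤ : ℕ∞) f')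
    (g g' : N → P) (hg : ContMDiff J K (⊤ : ℕ∞) g) (hg' : ContMDiff J K (⊤ : ℕ∞) g')
    (hfg : g ∘ f = g' ∘ f') (n : ℕ) (c : SCochain K P R n) :
    pullSC I M J N R f hf n (pullSC J N K P R g hg n c) =
      pullSC I M J N R f' hf' n (pullSC J N K P R g' hg' n c) := by
  funext σ
  rw [pullSC_apply, pullSC_apply, pullSC_apply, pullSC_apply]
  congr 1
  apply SSimplex.ext'
  funext x
  exact congrFun hfg (σ.toFun x)

end Infra2
section Infra25

variable {E : Type} [NormedAddCommGroup E] [NormedSpace ℝ E] {H : Type} [TopologicalSpace H]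
  {I : ModelWithCorners ℝ E H} {M : Type} [TopologicalSpace M] [ChartedSpace H M]

lemma dDC_val (Ω : ∀ n : ℕ, AddSubgroup (SCochain I M ℝ n))
    (hΩ : ∀ n x, x ∈ Ω n → scd I M ℝ n x ∈ Ω (n + 1)) (s n : ℕ) (x : DCgrp I M Ω s n) :
    (dDC I M Ω hΩ s n x).1 = (scd I M ℤ n x.1.1,
      x.1.2.2 - intToReal I M n x.1.1 - hd I M n x.1.2.1, scd I M ℝ n x.1.2.2) := rfl

/-- Auxiliary projection `(c, h, ω) ↦ c` on Hopkins–Singer groups. -/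
def projZ (Ω : ∀ n : ℕ, AddSubgroup (SCochain I M ℝ n)) (s n : ℕ) :
    DCgrp I M Ω s n →+ SCochain I M ℤ n :=
  AddMonoidHom.mk' (fun x => x.1.1) (fun _ _ => rfl)

lemma hd_one : hd I M 1 = scd I M ℝ 0 := rfl
lemma hd_two : hd I M 2 = scd I M ℝ 1 := rfl

/-- Definitional coercion from the shifted component type to real cochains. -/
@[reducible] def toSC {n : ℕ} (x : hCompT I M (n+1)) : SCochain I M ℝ n := x

lemma prod3_eq_iff {A B C : Type*} (x y : A × B × C) :
    x = y ↔ x.1 = y.1 ∧ x.2.1 = y.2.1 ∧ x.2.2 = y.2.2 := by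
  constructor
  · rintro rfl; exact ⟨rfl, rfl, rfl⟩
  · rintro ⟨h1, h2, h3⟩
    exact Prod.ext h1 (Prod.ext h2 h3)

end Infra25

section Stmt17

variable {E0 : Type} [NormedAddCommGroup E0] [NormedSpace ℝ E0] {H0 : Type}
  [TopologicalSpace H0] (I0 : ModelWithCorners ℝ E0 H0)
  (G0 : Type) [TopologicalSpace G0] [ChartedSpace H0 G0]
  {E1 : Type} [NormedAddCommGroup E1] [NormedSpace ℝ E1] {H1 : Type}
  [TopologicalSpace H1] (I1 : ModelWithCorners ℝ E1 H1)
  (G1 : Type) [TopologicalSpace G1] [ChartedSpace H1 G1]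
  {E2 : Type} [NormedAddCommGroup E2] [NormedSpace ℝ E2] {H2 : Type}
  [TopologicalSpace H2] (I2 : ModelWithCorners ℝ E2 H2)
  (G2 : Type) [TopologicalSpace G2] [ChartedSpace H2 G2]
  {E3 : Type} [NormedAddCommGroup E3] [NormedSpace ℝ E3] {H3 : Type}
  [TopologicalSpace H3] (I3 : ModelWithCorners ℝ E3 H3)
  (G3 : Type) [TopologicalSpace G3] [ChartedSpace H3 G3]
  -- the face maps of (a truncation of) the nerve of the Lie groupoid `Γ_• = (Γ_1 ⇉ Γ_0)`,
  -- with `Γ_q = G q`: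
  (f1 : Fin 2 → G1 → G0) (hf1 : ∀ i, ContMDiff I1 I0 (⊤ : ℕ∞) (f1 i))
  (f2 : Fin 3 → G2 → G1) (hf2 : ∀ i, ContMDiff I2 I1 (⊤ : ℕ∞) (f2 i))
  (f3 : Fin 4 → G3 → G2) (hf3 : ∀ i, ContMDiff I3 I2 (⊤ : ℕ∞) (f3 i))

/-- The simplicial differential `δ = ∂_0^* - ∂_1^*` on triples, level `0 → 1`. -/
def δT01 (n : ℕ) :
    (SCochain I0 G0 ℤ n × hCompT I0 G0 n × SCochain I0 G0 ℝ n) →+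
      (SCochain I1 G1 ℤ n × hCompT I1 G1 n × SCochain I1 G1 ℝ n) :=
  pullT I1 G1 I0 G0 (f1 0) (hf1 0) n - pullT I1 G1 I0 G0 (f1 1) (hf1 1) n

/-- The simplicial differential `δ = ∑ (-1)^i ∂_i^*` on triples, level `1 → 2`. -/
def δT12 (n : ℕ) :
    (SCochain I1 G1 ℤ n × hCompT I1 G1 n × SCochain I1 G1 ℝ n) →+
      (SCochain I2 G2 ℤ n × hCompT I2 G2 n × SCochain I2 G2 ℝ n) :=
  ∑ i : Fin 3, (-1 : ℤ) ^ (i : ℕ) • pullT I2 G2 I1 G1 (f2 i) (hf2 i) n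

/-- The simplicial differential on triples, level `2 → 3`. -/
def δT23 (n : ℕ) :
    (SCochain I2 G2 ℤ n × hCompT I2 G2 n × SCochain I2 G2 ℝ n) →+
      (SCochain I3 G3 ℤ n × hCompT I3 G3 n × SCochain I3 G3 ℝ n) :=
  ∑ i : Fin 4, (-1 : ℤ) ^ (i : ℕ) • pullT I3 G3 I2 G2 (f3 i) (hf3 i) n

/-- The simplicial differential `δ` on integral cochains, level `0 → 1`. -/
def δZ01 (n : ℕ) : SCochain I0 G0 ℤ n →+ SCochain I1 G1 ℤ n :=
  pullSC I1 G1 I0 G0 ℤ (f1 0) (hf1 0) n - pullSC I1 G1 I0 G0 ℤ (f1 1) (hf1 1) n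

/-- The simplicial differential `δ` on integral cochains, level `1 → 2`. -/
def δZ12 (n : ℕ) : SCochain I1 G1 ℤ n →+ SCochain I2 G2 ℤ n :=
  ∑ i : Fin 3, (-1 : ℤ) ^ (i : ℕ) • pullSC I2 G2 I1 G1 ℤ (f2 i) (hf2 i) n

/-- The simplicial differential `δ` on integral cochains, level `2 → 3`. -/
def δZ23 (n : ℕ) : SCochain I2 G2 ℤ n →+ SCochain I3 G3 ℤ n :=
  ∑ i : Fin 4, (-1 : ℤ) ^ (i : ℕ) • pullSC I3 G3 I2 G2 ℤ (f3 i) (hf3 i) n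

/-- The simplicial differential on real cochains, level `0 → 1`. -/
def δR01 (n : ℕ) : SCochain I0 G0 ℝ n →+ SCochain I1 G1 ℝ n :=
  pullSC I1 G1 I0 G0 ℝ (f1 0) (hf1 0) n - pullSC I1 G1 I0 G0 ℝ (f1 1) (hf1 1) n

/-- The simplicial differential on real cochains, level `1 → 2`. -/
def δR12 (n : ℕ) : SCochain I1 G1 ℝ n →+ SCochain I2 G2 ℝ n :=
  ∑ i : Fin 3, (-1 : ℤ) ^ (i : ℕ) • pullSC I2 G2 I1 G1 ℝ (f2 i) (hf2 i) n

/-- The simplicial differential on real cochains, level `2 → 3`. -/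
def δR23 (n : ℕ) : SCochain I2 G2 ℝ n →+ SCochain I3 G3 ℝ n :=
  ∑ i : Fin 4, (-1 : ℤ) ^ (i : ℕ) • pullSC I3 G3 I2 G2 ℝ (f3 i) (hf3 i) n

lemma δR01_scd (n : ℕ) (x : SCochain I0 G0 ℝ n) :
    δR01 I0 G0 I1 G1 f1 hf1 (n+1) (scd I0 G0 ℝ n x)
      = scd I1 G1 ℝ n (δR01 I0 G0 I1 G1 f1 hf1 n x) := by
  show pullSC I1 G1 I0 G0 ℝ (f1 0) (hf1 0) (n+1) (scd I0 G0 ℝ n x)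
      - pullSC I1 G1 I0 G0 ℝ (f1 1) (hf1 1) (n+1) (scd I0 G0 ℝ n x)
    = scd I1 G1 ℝ n (pullSC I1 G1 I0 G0 ℝ (f1 0) (hf1 0) n x
      - pullSC I1 G1 I0 G0 ℝ (f1 1) (hf1 1) n x)
  rw [map_sub, pullSC_scd, pullSC_scd]

lemma δR12_scd (n : ℕ) (x : SCochain I1 G1 ℝ n) :
    δR12 I1 G1 I2 G2 f2 hf2 (n+1) (scd I1 G1 ℝ n x)
      = scd I2 G2 ℝ n (δR12 I1 G1 I2 G2 f2 hf2 n x) := by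
  show (∑ i : Fin 3, (-1 : ℤ) ^ (i : ℕ) • pullSC I2 G2 I1 G1 ℝ (f2 i) (hf2 i) (n+1))
      (scd I1 G1 ℝ n x)
    = scd I2 G2 ℝ n ((∑ i : Fin 3, (-1 : ℤ) ^ (i : ℕ) • pullSC I2 G2 I1 G1 ℝ (f2 i) (hf2 i) n) x)
  rw [AddMonoidHom.finset_sum_apply, AddMonoidHom.finset_sum_apply, map_sum]
  refine Finset.sum_congr rfl fun i _ => ?_
  show (-1 : ℤ) ^ (i : ℕ) • pullSC I2 G2 I1 G1 ℝ (f2 i) (hf2 i) (n+1) (scd I1 G1 ℝ n x)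
    = scd I2 G2 ℝ n ((-1 : ℤ) ^ (i : ℕ) • pullSC I2 G2 I1 G1 ℝ (f2 i) (hf2 i) n x)
  rw [map_zsmul, pullSC_scd]

lemma δR23_scd (n : ℕ) (x : SCochain I2 G2 ℝ n) :
    δR23 I2 G2 I3 G3 f3 hf3 (n+1) (scd I2 G2 ℝ n x)
      = scd I3 G3 ℝ n (δR23 I2 G2 I3 G3 f3 hf3 n x) := by
  show (∑ i : Fin 4, (-1 : ℤ) ^ (i : ℕ) • pullSC I3 G3 I2 G2 ℝ (f3 i) (hf3 i) (n+1))
      (scd I2 G2 ℝ n x)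
    = scd I3 G3 ℝ n ((∑ i : Fin 4, (-1 : ℤ) ^ (i : ℕ) • pullSC I3 G3 I2 G2 ℝ (f3 i) (hf3 i) n) x)
  rw [AddMonoidHom.finset_sum_apply, AddMonoidHom.finset_sum_apply, map_sum]
  refine Finset.sum_congr rfl fun i _ => ?_
  show (-1 : ℤ) ^ (i : ℕ) • pullSC I3 G3 I2 G2 ℝ (f3 i) (hf3 i) (n+1) (scd I2 G2 ℝ n x)
    = scd I3 G3 ℝ n ((-1 : ℤ) ^ (i : ℕ) • pullSC I3 G3 I2 G2 ℝ (f3 i) (hf3 i) n x)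
  rw [map_zsmul, pullSC_scd]

lemma intToReal_δZ01 (n : ℕ) (c : SCochain I0 G0 ℤ n) :
    intToReal I1 G1 n (δZ01 I0 G0 I1 G1 f1 hf1 n c)
      = δR01 I0 G0 I1 G1 f1 hf1 n (intToReal I0 G0 n c) := by
  show intToReal I1 G1 n (pullSC I1 G1 I0 G0 ℤ (f1 0) (hf1 0) n c
      - pullSC I1 G1 I0 G0 ℤ (f1 1) (hf1 1) n c)
    = pullSC I1 G1 I0 G0 ℝ (f1 0) (hf1 0) n (intToReal I0 G0 n c)
      - pullSC I1 G1 I0 G0 ℝ (f1 1) (hf1 1) n (intToReal I0 G0 n c)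
  rw [map_sub, intToReal_pullSC, intToReal_pullSC]

lemma intToReal_δZ12 (n : ℕ) (c : SCochain I1 G1 ℤ n) :
    intToReal I2 G2 n (δZ12 I1 G1 I2 G2 f2 hf2 n c)
      = δR12 I1 G1 I2 G2 f2 hf2 n (intToReal I1 G1 n c) := by
  show intToReal I2 G2 n ((∑ i : Fin 3, (-1 : ℤ) ^ (i : ℕ) • pullSC I2 G2 I1 G1 ℤ (f2 i) (hf2 i) n) c)
    = (∑ i : Fin 3, (-1 : ℤ) ^ (i : ℕ) • pullSC I2 G2 I1 G1 ℝ (f2 i) (hf2 i) n) (intToReal I1 G1 n c)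
  rw [AddMonoidHom.finset_sum_apply, AddMonoidHom.finset_sum_apply, map_sum]
  refine Finset.sum_congr rfl fun i _ => ?_
  show intToReal I2 G2 n ((-1 : ℤ) ^ (i : ℕ) • pullSC I2 G2 I1 G1 ℤ (f2 i) (hf2 i) n c)
    = (-1 : ℤ) ^ (i : ℕ) • pullSC I2 G2 I1 G1 ℝ (f2 i) (hf2 i) n (intToReal I1 G1 n c)
  rw [map_zsmul, intToReal_pullSC]

lemma intToReal_δZ23 (n : ℕ) (c : SCochain I2 G2 ℤ n) :
    intToReal I3 G3 n (δZ23 I2 G2 I3 G3 f3 hf3 n c)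
      = δR23 I2 G2 I3 G3 f3 hf3 n (intToReal I2 G2 n c) := by
  show intToReal I3 G3 n ((∑ i : Fin 4, (-1 : ℤ) ^ (i : ℕ) • pullSC I3 G3 I2 G2 ℤ (f3 i) (hf3 i) n) c)
    = (∑ i : Fin 4, (-1 : ℤ) ^ (i : ℕ) • pullSC I3 G3 I2 G2 ℝ (f3 i) (hf3 i) n) (intToReal I2 G2 n c)
  rw [AddMonoidHom.finset_sum_apply, AddMonoidHom.finset_sum_apply, map_sum]
  refine Finset.sum_congr rfl fun i _ => ?_
  show intToReal I3 G3 n ((-1 : ℤ) ^ (i : ℕ) • pullSC I3 G3 I2 G2 ℤ (f3 i) (hf3 i) n c)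
    = (-1 : ℤ) ^ (i : ℕ) • pullSC I3 G3 I2 G2 ℝ (f3 i) (hf3 i) n (intToReal I2 G2 n c)
  rw [map_zsmul, intToReal_pullSC]

lemma δR01_mem (A : ∀ n : ℕ, AddSubgroup (SCochain I0 G0 ℝ n))
    (B : ∀ n : ℕ, AddSubgroup (SCochain I1 G1 ℝ n))
    (hp : ∀ (i) (n) x, x ∈ A n → pullSC I1 G1 I0 G0 ℝ (f1 i) (hf1 i) n x ∈ B n)
    (n : ℕ) (x : SCochain I0 G0 ℝ n) (hx : x ∈ A n) :
    δR01 I0 G0 I1 G1 f1 hf1 n x ∈ B n :=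
  sub_mem (hp 0 n x hx) (hp 1 n x hx)

lemma δR12_mem (A : ∀ n : ℕ, AddSubgroup (SCochain I1 G1 ℝ n))
    (B : ∀ n : ℕ, AddSubgroup (SCochain I2 G2 ℝ n))
    (hp : ∀ (i) (n) x, x ∈ A n → pullSC I2 G2 I1 G1 ℝ (f2 i) (hf2 i) n x ∈ B n)
    (n : ℕ) (x : SCochain I1 G1 ℝ n) (hx : x ∈ A n) :
    δR12 I1 G1 I2 G2 f2 hf2 n x ∈ B n := by
  rw [show δR12 I1 G1 I2 G2 f2 hf2 n x
    = ∑ i : Fin 3, ((-1 : ℤ) ^ (i : ℕ) • pullSC I2 G2 I1 G1 ℝ (f2 i) (hf2 i) n) x from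
      AddMonoidHom.finset_sum_apply _ _ _]
  exact sum_mem fun i _ => zsmul_mem (hp i n x hx) _

lemma δR12_δR01 (hs1 : f1 0 ∘ f2 1 = f1 0 ∘ f2 0) (hs2 : f1 0 ∘ f2 2 = f1 1 ∘ f2 0)
    (hs3 : f1 1 ∘ f2 2 = f1 1 ∘ f2 1) (n : ℕ) (x : SCochain I0 G0 ℝ n) :
    δR12 I1 G1 I2 G2 f2 hf2 n (δR01 I0 G0 I1 G1 f1 hf1 n x) = 0 := by
  have hδ : δR01 I0 G0 I1 G1 f1 hf1 n x
      = pullSC I1 G1 I0 G0 ℝ (f1 0) (hf1 0) n x - pullSC I1 G1 I0 G0 ℝ (f1 1) (hf1 1) n x := rfl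
  show (∑ i : Fin 3, (-1 : ℤ) ^ (i : ℕ) • pullSC I2 G2 I1 G1 ℝ (f2 i) (hf2 i) n)
      (δR01 I0 G0 I1 G1 f1 hf1 n x) = 0
  rw [AddMonoidHom.finset_sum_apply, Fin.sum_univ_three]
  simp only [AddMonoidHom.smul_apply, hδ, map_sub]
  rw [pullSC_pullSC_congr (f2 1) (f2 0) (hf2 1) (hf2 0) (f1 0) (f1 0) (hf1 0) (hf1 0) hs1 n x,
    pullSC_pullSC_congr (f2 2) (f2 0) (hf2 2) (hf2 0) (f1 0) (f1 1) (hf1 0) (hf1 1) hs2 n x,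
    pullSC_pullSC_congr (f2 2) (f2 1) (hf2 2) (hf2 1) (f1 1) (f1 1) (hf1 1) (hf1 1) hs3 n x]
  simp only [show ((0 : Fin 3) : ℕ) = 0 from rfl, show ((1 : Fin 3) : ℕ) = 1 from rfl,
    show ((2 : Fin 3) : ℕ) = 2 from rfl, pow_zero, pow_one,
    show ((-1 : ℤ) ^ 2) = 1 from by norm_num, one_smul, neg_one_zsmul]
  abel

lemma δR23_δR12 (hs4 : f2 0 ∘ f3 1 = f2 0 ∘ f3 0) (hs5 : f2 0 ∘ f3 2 = f2 1 ∘ f3 0)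
    (hs6 : f2 0 ∘ f3 3 = f2 2 ∘ f3 0) (hs7 : f2 1 ∘ f3 2 = f2 1 ∘ f3 1)
    (hs8 : f2 1 ∘ f3 3 = f2 2 ∘ f3 1) (hs9 : f2 2 ∘ f3 3 = f2 2 ∘ f3 2)
    (n : ℕ) (x : SCochain I1 G1 ℝ n) :
    δR23 I2 G2 I3 G3 f3 hf3 n (δR12 I1 G1 I2 G2 f2 hf2 n x) = 0 := by
  have hδ : δR12 I1 G1 I2 G2 f2 hf2 n x
      = pullSC I2 G2 I1 G1 ℝ (f2 0) (hf2 0) n x - pullSC I2 G2 I1 G1 ℝ (f2 1) (hf2 1) n x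
        + pullSC I2 G2 I1 G1 ℝ (f2 2) (hf2 2) n x := by
    show (∑ i : Fin 3, (-1 : ℤ) ^ (i : ℕ) • pullSC I2 G2 I1 G1 ℝ (f2 i) (hf2 i) n) x = _
    rw [AddMonoidHom.finset_sum_apply, Fin.sum_univ_three]
    simp only [AddMonoidHom.smul_apply]
    simp only [show ((0 : Fin 3) : ℕ) = 0 from rfl,
      show ((1 : Fin 3) : ℕ) = 1 from rfl, show ((2 : Fin 3) : ℕ) = 2 from rfl,
      pow_zero, pow_one, show ((-1 : ℤ) ^ 2) = 1 from by norm_num, one_smul, neg_one_zsmul]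
    abel
  show (∑ i : Fin 4, (-1 : ℤ) ^ (i : ℕ) • pullSC I3 G3 I2 G2 ℝ (f3 i) (hf3 i) n)
      (δR12 I1 G1 I2 G2 f2 hf2 n x) = 0
  rw [AddMonoidHom.finset_sum_apply, Fin.sum_univ_four]
  simp only [AddMonoidHom.smul_apply, hδ, map_sub, map_add]
  rw [pullSC_pullSC_congr (f3 1) (f3 0) (hf3 1) (hf3 0) (f2 0) (f2 0) (hf2 0) (hf2 0) hs4 n x,
    pullSC_pullSC_congr (f3 2) (f3 0) (hf3 2) (hf3 0) (f2 0) (f2 1) (hf2 0) (hf2 1) hs5 n x,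
    pullSC_pullSC_congr (f3 3) (f3 0) (hf3 3) (hf3 0) (f2 0) (f2 2) (hf2 0) (hf2 2) hs6 n x,
    pullSC_pullSC_congr (f3 2) (f3 1) (hf3 2) (hf3 1) (f2 1) (f2 1) (hf2 1) (hf2 1) hs7 n x,
    pullSC_pullSC_congr (f3 3) (f3 1) (hf3 3) (hf3 1) (f2 1) (f2 2) (hf2 1) (hf2 2) hs8 n x,
    pullSC_pullSC_congr (f3 3) (f3 2) (hf3 3) (hf3 2) (f2 2) (f2 2) (hf2 2) (hf2 2) hs9 n x]
  simp only [show ((0 : Fin 4) : ℕ) = 0 from rfl, show ((1 : Fin 4) : ℕ) = 1 from rfl,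
    show ((2 : Fin 4) : ℕ) = 2 from rfl, show ((3 : Fin 4) : ℕ) = 3 from rfl,
    pow_zero, pow_one, show ((-1 : ℤ) ^ 2) = 1 from by norm_num,
    show ((-1 : ℤ) ^ 3) = -1 from by norm_num, one_smul, neg_one_zsmul]
  abel

lemma δT01_fst (n : ℕ) (t : SCochain I0 G0 ℤ n × hCompT I0 G0 n × SCochain I0 G0 ℝ n) :
    (δT01 I0 G0 I1 G1 f1 hf1 n t).1 = δZ01 I0 G0 I1 G1 f1 hf1 n t.1 := rfl

lemma δT01_snd2 (n : ℕ) (t : SCochain I0 G0 ℤ n × hCompT I0 G0 n × SCochain I0 G0 ℝ n) :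
    (δT01 I0 G0 I1 G1 f1 hf1 n t).2.2 = δR01 I0 G0 I1 G1 f1 hf1 n t.2.2 := rfl

lemma δT01_snd1 (n : ℕ)
    (t : SCochain I0 G0 ℤ (n+1) × hCompT I0 G0 (n+1) × SCochain I0 G0 ℝ (n+1)) :
    (δT01 I0 G0 I1 G1 f1 hf1 (n+1) t).2.1 = δR01 I0 G0 I1 G1 f1 hf1 n t.2.1 := rfl

lemma δT12_fst (n : ℕ) (t : SCochain I1 G1 ℤ n × hCompT I1 G1 n × SCochain I1 G1 ℝ n) :
    (δT12 I1 G1 I2 G2 f2 hf2 n t).1 = δZ12 I1 G1 I2 G2 f2 hf2 n t.1 := by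
  show ((∑ i : Fin 3, (-1 : ℤ) ^ (i : ℕ) • pullT I2 G2 I1 G1 (f2 i) (hf2 i) n) t).1
    = (∑ i : Fin 3, (-1 : ℤ) ^ (i : ℕ) • pullSC I2 G2 I1 G1 ℤ (f2 i) (hf2 i) n) t.1
  rw [AddMonoidHom.finset_sum_apply, AddMonoidHom.finset_sum_apply, Prod.fst_sum]
  exact Finset.sum_congr rfl fun i _ => rfl

lemma δT12_snd2 (n : ℕ) (t : SCochain I1 G1 ℤ n × hCompT I1 G1 n × SCochain I1 G1 ℝ n) :
    (δT12 I1 G1 I2 G2 f2 hf2 n t).2.2 = δR12 I1 G1 I2 G2 f2 hf2 n t.2.2 := by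
  show ((∑ i : Fin 3, (-1 : ℤ) ^ (i : ℕ) • pullT I2 G2 I1 G1 (f2 i) (hf2 i) n) t).2.2
    = (∑ i : Fin 3, (-1 : ℤ) ^ (i : ℕ) • pullSC I2 G2 I1 G1 ℝ (f2 i) (hf2 i) n) t.2.2
  rw [AddMonoidHom.finset_sum_apply, AddMonoidHom.finset_sum_apply, Prod.snd_sum, Prod.snd_sum]
  exact Finset.sum_congr rfl fun i _ => rfl

lemma δT12_snd1 (n : ℕ)
    (t : SCochain I1 G1 ℤ (n+1) × hCompT I1 G1 (n+1) × SCochain I1 G1 ℝ (n+1)) :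
    (δT12 I1 G1 I2 G2 f2 hf2 (n+1) t).2.1 = δR12 I1 G1 I2 G2 f2 hf2 n t.2.1 := by
  show ((∑ i : Fin 3, (-1 : ℤ) ^ (i : ℕ) • pullT I2 G2 I1 G1 (f2 i) (hf2 i) (n+1)) t).2.1
    = (∑ i : Fin 3, (-1 : ℤ) ^ (i : ℕ) • pullSC I2 G2 I1 G1 ℝ (f2 i) (hf2 i) n) t.2.1
  rw [AddMonoidHom.finset_sum_apply, Prod.snd_sum, Prod.fst_sum]
  erw [AddMonoidHom.finset_sum_apply]
  exact Finset.sum_congr rfl fun i _ => rfl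

lemma δT23_fst (n : ℕ) (t : SCochain I2 G2 ℤ n × hCompT I2 G2 n × SCochain I2 G2 ℝ n) :
    (δT23 I2 G2 I3 G3 f3 hf3 n t).1 = δZ23 I2 G2 I3 G3 f3 hf3 n t.1 := by
  show ((∑ i : Fin 4, (-1 : ℤ) ^ (i : ℕ) • pullT I3 G3 I2 G2 (f3 i) (hf3 i) n) t).1
    = (∑ i : Fin 4, (-1 : ℤ) ^ (i : ℕ) • pullSC I3 G3 I2 G2 ℤ (f3 i) (hf3 i) n) t.1
  rw [AddMonoidHom.finset_sum_apply, AddMonoidHom.finset_sum_apply, Prod.fst_sum]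
  exact Finset.sum_congr rfl fun i _ => rfl

lemma δT23_snd2 (n : ℕ) (t : SCochain I2 G2 ℤ n × hCompT I2 G2 n × SCochain I2 G2 ℝ n) :
    (δT23 I2 G2 I3 G3 f3 hf3 n t).2.2 = δR23 I2 G2 I3 G3 f3 hf3 n t.2.2 := by
  show ((∑ i : Fin 4, (-1 : ℤ) ^ (i : ℕ) • pullT I3 G3 I2 G2 (f3 i) (hf3 i) n) t).2.2
    = (∑ i : Fin 4, (-1 : ℤ) ^ (i : ℕ) • pullSC I3 G3 I2 G2 ℝ (f3 i) (hf3 i) n) t.2.2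
  rw [AddMonoidHom.finset_sum_apply, AddMonoidHom.finset_sum_apply, Prod.snd_sum, Prod.snd_sum]
  exact Finset.sum_congr rfl fun i _ => rfl
set_option maxHeartbeats 2000000 in
/-- Let `Γ_• = (Γ_1 ⇉ Γ_0)` be a Lie groupoid with nerve
`Γ_0, Γ_1, Γ_2, Γ_3, …` (face maps `f1, f2, f3`, satisfying the simplicial identities) whose
differentiable cohomology vanishes in positive degrees (hypotheses `hvan1`, `hvan2`; this
holds e.g. for proper Lie groupoids, in particular action groupoids of compact Lie groups).
Then the projection `(c, h, ω) ↦ c` induces an isomorphism from the second total cohomology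
of the double complex `DC_1^•(Γ_•)` to the second total cohomology `H^2(Γ_•, ℤ)` of the
double complex of smooth integral singular cochains `C_ℤ^•(Γ_•)`.  The total differentials
`D1, D2` (resp. `DZ1, DZ2`) are characterized componentwise by the usual formulas; forms on
each `Γ_q` are encoded by `d`-stable, pullback-stable subcomplexes `Ω_q` of real smooth
singular cochains satisfying the de Rham theorem on each `Γ_q`. -/
theorem stmt17
    [IsManifold I0 (⊤ : ℕ∞) G0] [IsManifold I1 (⊤ : ℕ∞) G1]
    [IsManifold I2 (⊤ : ℕ∞) G2] [IsManifold I3 (⊤ : ℕ∞) G3]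
    -- simplicial identities for the face maps:
    (hs1 : f1 0 ∘ f2 1 = f1 0 ∘ f2 0) (hs2 : f1 0 ∘ f2 2 = f1 1 ∘ f2 0)
    (hs3 : f1 1 ∘ f2 2 = f1 1 ∘ f2 1)
    (hs4 : f2 0 ∘ f3 1 = f2 0 ∘ f3 0) (hs5 : f2 0 ∘ f3 2 = f2 1 ∘ f3 0)
    (hs6 : f2 0 ∘ f3 3 = f2 2 ∘ f3 0) (hs7 : f2 1 ∘ f3 2 = f2 1 ∘ f3 1)
    (hs8 : f2 1 ∘ f3 3 = f2 2 ∘ f3 1) (hs9 : f2 2 ∘ f3 3 = f2 2 ∘ f3 2)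
    -- de Rham subcomplexes on the nerve:
    (Ω0 : ∀ n : ℕ, AddSubgroup (SCochain I0 G0 ℝ n))
    (Ω1 : ∀ n : ℕ, AddSubgroup (SCochain I1 G1 ℝ n))
    (Ω2 : ∀ n : ℕ, AddSubgroup (SCochain I2 G2 ℝ n))
    (Ω3 : ∀ n : ℕ, AddSubgroup (SCochain I3 G3 ℝ n))
    (hΩ0 : ∀ n x, x ∈ Ω0 n → scd I0 G0 ℝ n x ∈ Ω0 (n + 1))
    (hΩ1 : ∀ n x, x ∈ Ω1 n → scd I1 G1 ℝ n x ∈ Ω1 (n + 1))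
    (hΩ2 : ∀ n x, x ∈ Ω2 n → scd I2 G2 ℝ n x ∈ Ω2 (n + 1))
    (hΩ3 : ∀ n x, x ∈ Ω3 n → scd I3 G3 ℝ n x ∈ Ω3 (n + 1))
    -- pullback stability of forms along the face maps:
    (hp1 : ∀ (i) (n) x, x ∈ Ω0 n → pullSC I1 G1 I0 G0 ℝ (f1 i) (hf1 i) n x ∈ Ω1 n)
    (hp2 : ∀ (i) (n) x, x ∈ Ω1 n → pullSC I2 G2 I1 G1 ℝ (f2 i) (hf2 i) n x ∈ Ω2 n)
    (hp3 : ∀ (i) (n) x, x ∈ Ω2 n → pullSC I3 G3 I2 G2 ℝ (f3 i) (hf3 i) n x ∈ Ω3 n)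
    -- the de Rham theorem on each manifold `Γ_q`:
    (hDR0 : ∀ (n : ℕ) (a : SCochain I0 G0 ℝ (n + 1)), scd I0 G0 ℝ (n + 1) a ∈ Ω0 (n + 2) →
      ∃ α ∈ Ω0 (n + 1), ∃ b : SCochain I0 G0 ℝ n, a = α + scd I0 G0 ℝ n b)
    (hDR0' : ∀ a : SCochain I0 G0 ℝ 0, scd I0 G0 ℝ 0 a ∈ Ω0 1 → a ∈ Ω0 0)
    (hDR1 : ∀ (n : ℕ) (a : SCochain I1 G1 ℝ (n + 1)), scd I1 G1 ℝ (n + 1) a ∈ Ω1 (n + 2) →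
      ∃ α ∈ Ω1 (n + 1), ∃ b : SCochain I1 G1 ℝ n, a = α + scd I1 G1 ℝ n b)
    (hDR1' : ∀ a : SCochain I1 G1 ℝ 0, scd I1 G1 ℝ 0 a ∈ Ω1 1 → a ∈ Ω1 0)
    (hDR2 : ∀ (n : ℕ) (a : SCochain I2 G2 ℝ (n + 1)), scd I2 G2 ℝ (n + 1) a ∈ Ω2 (n + 2) →
      ∃ α ∈ Ω2 (n + 1), ∃ b : SCochain I2 G2 ℝ n, a = α + scd I2 G2 ℝ n b)
    (hDR2' : ∀ a : SCochain I2 G2 ℝ 0, scd I2 G2 ℝ 0 a ∈ Ω2 1 → a ∈ Ω2 0)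
    -- vanishing of differentiable cohomology in positive degrees: the complex
    -- `(Ω^0(Γ_•), δ)` of smooth functions on the nerve is exact in positive degrees:
    (hvan1 : ∀ x ∈ Ω1 0,
      (∑ i : Fin 3, (-1 : ℤ) ^ (i : ℕ) • pullSC I2 G2 I1 G1 ℝ (f2 i) (hf2 i) 0) x = 0 →
      ∃ y ∈ Ω0 0,
        pullSC I1 G1 I0 G0 ℝ (f1 0) (hf1 0) 0 y -
          pullSC I1 G1 I0 G0 ℝ (f1 1) (hf1 1) 0 y = x)
    (hvan2 : ∀ x ∈ Ω2 0,
      (∑ i : Fin 4, (-1 : ℤ) ^ (i : ℕ) • pullSC I3 G3 I2 G2 ℝ (f3 i) (hf3 i) 0) x = 0 →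
      ∃ y ∈ Ω1 0,
        (∑ i : Fin 3, (-1 : ℤ) ^ (i : ℕ) • pullSC I2 G2 I1 G1 ℝ (f2 i) (hf2 i) 0) y = x)
    -- the total differentials of the double complex `DC_1^•(Γ_•)`:
    (D1 : (DCgrp I0 G0 Ω0 1 1 × DCgrp I1 G1 Ω1 1 0) →+
      (DCgrp I0 G0 Ω0 1 2 × DCgrp I1 G1 Ω1 1 1 × DCgrp I2 G2 Ω2 1 0))
    (D2 : (DCgrp I0 G0 Ω0 1 2 × DCgrp I1 G1 Ω1 1 1 × DCgrp I2 G2 Ω2 1 0) →+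
      (DCgrp I0 G0 Ω0 1 3 × DCgrp I1 G1 Ω1 1 2 × DCgrp I2 G2 Ω2 1 1 × DCgrp I3 G3 Ω3 1 0))
    (hD1 : ∀ w,
      (D1 w).1 = dDC I0 G0 Ω0 hΩ0 1 1 w.1 ∧
      ((D1 w).2.1).1 = δT01 I0 G0 I1 G1 f1 hf1 1 w.1.1 - (dDC I1 G1 Ω1 hΩ1 1 0 w.2).1 ∧
      ((D1 w).2.2).1 = δT12 I1 G1 I2 G2 f2 hf2 0 w.2.1)
    (hD2 : ∀ w,
      (D2 w).1 = dDC I0 G0 Ω0 hΩ0 1 2 w.1 ∧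
      ((D2 w).2.1).1 = δT01 I0 G0 I1 G1 f1 hf1 2 w.1.1 - (dDC I1 G1 Ω1 hΩ1 1 1 w.2.1).1 ∧
      ((D2 w).2.2.1).1 =
        δT12 I1 G1 I2 G2 f2 hf2 1 w.2.1.1 + (dDC I2 G2 Ω2 hΩ2 1 0 w.2.2).1 ∧
      ((D2 w).2.2.2).1 = δT23 I2 G2 I3 G3 f3 hf3 0 w.2.2.1)
    -- the total differentials of the double complex `C_ℤ^•(Γ_•)`:
    (DZ1 : (SCochain I0 G0 ℤ 1 × SCochain I1 G1 ℤ 0) →+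
      (SCochain I0 G0 ℤ 2 × SCochain I1 G1 ℤ 1 × SCochain I2 G2 ℤ 0))
    (DZ2 : (SCochain I0 G0 ℤ 2 × SCochain I1 G1 ℤ 1 × SCochain I2 G2 ℤ 0) →+
      (SCochain I0 G0 ℤ 3 × SCochain I1 G1 ℤ 2 × SCochain I2 G2 ℤ 1 × SCochain I3 G3 ℤ 0))
    (hDZ1 : ∀ u,
      (DZ1 u).1 = scd I0 G0 ℤ 1 u.1 ∧
      (DZ1 u).2.1 = δZ01 I0 G0 I1 G1 f1 hf1 1 u.1 - scd I1 G1 ℤ 0 u.2 ∧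
      (DZ1 u).2.2 = δZ12 I1 G1 I2 G2 f2 hf2 0 u.2)
    (hDZ2 : ∀ u,
      (DZ2 u).1 = scd I0 G0 ℤ 2 u.1 ∧
      (DZ2 u).2.1 = δZ01 I0 G0 I1 G1 f1 hf1 2 u.1 - scd I1 G1 ℤ 1 u.2.1 ∧
      (DZ2 u).2.2.1 = δZ12 I1 G1 I2 G2 f2 hf2 1 u.2.1 + scd I2 G2 ℤ 0 u.2.2 ∧
      (DZ2 u).2.2.2 = δZ23 I2 G2 I3 G3 f3 hf3 0 u.2.2) :
    -- the projection `(c, h, ω) ↦ c` induces an isomorphism on second total cohomology: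
    ∃ e : Hq D1 D2 ≃+ Hq DZ1 DZ2,
      ∀ (w : DCgrp I0 G0 Ω0 1 2 × DCgrp I1 G1 Ω1 1 1 × DCgrp I2 G2 Ω2 1 0)
        (hw : w ∈ D2.ker)
        (hw' : (w.1.1.1, w.2.1.1.1, w.2.2.1.1) ∈ DZ2.ker),
        e (HqMk D1 D2 w hw) = HqMk DZ1 DZ2 (w.1.1.1, w.2.1.1.1, w.2.2.1.1) hw' := by
  classical
  -- the projection homomorphisms
  let π1 : (DCgrp I0 G0 Ω0 1 1 × DCgrp I1 G1 Ω1 1 0) →+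
      (SCochain I0 G0 ℤ 1 × SCochain I1 G1 ℤ 0) :=
    (projZ Ω0 1 1).prodMap (projZ Ω1 1 0)
  let π2 : (DCgrp I0 G0 Ω0 1 2 × DCgrp I1 G1 Ω1 1 1 × DCgrp I2 G2 Ω2 1 0) →+
      (SCochain I0 G0 ℤ 2 × SCochain I1 G1 ℤ 1 × SCochain I2 G2 ℤ 0) :=
    (projZ Ω0 1 2).prodMap ((projZ Ω1 1 1).prodMap (projZ Ω2 1 0))
  -- commutation of the projection with the total differentials
  have comm1 : ∀ v, π2 (D1 v) = DZ1 (π1 v) := by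
    intro v
    refine Prod.ext ?_ (Prod.ext ?_ ?_)
    · rw [(hDZ1 _).1]
      exact congrArg (fun z : DCgrp I0 G0 Ω0 1 2 => z.1.1) (hD1 v).1
    · rw [(hDZ1 _).2.1]
      exact congrArg Prod.fst (hD1 v).2.1
    · rw [(hDZ1 _).2.2]
      have h3 := congrArg Prod.fst (hD1 v).2.2
      rw [δT12_fst I1 G1 I2 G2 f2 hf2 0 v.2.1] at h3
      exact h3
  have comm2 : ∀ w, (hD2 w).1 = (hD2 w).1 → DZ2 (π2 w) =
      ((D2 w).1.1.1, (D2 w).2.1.1.1, (D2 w).2.2.1.1.1, (D2 w).2.2.2.1.1) := by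
    intro w _
    refine Prod.ext ?_ (Prod.ext ?_ (Prod.ext ?_ ?_))
    · rw [(hDZ2 _).1]
      exact (congrArg (fun z : DCgrp I0 G0 Ω0 1 3 => z.1.1) (hD2 w).1).symm
    · rw [(hDZ2 _).2.1]
      exact (congrArg Prod.fst (hD2 w).2.1).symm
    · rw [(hDZ2 _).2.2.1]
      have h3 := congrArg Prod.fst (hD2 w).2.2.1
      rw [Prod.fst_add, δT12_fst I1 G1 I2 G2 f2 hf2 1 w.2.1.1] at h3
      exact h3.symm
    · rw [(hDZ2 _).2.2.2]
      have h4 := congrArg Prod.fst (hD2 w).2.2.2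
      rw [δT23_fst I2 G2 I3 G3 f3 hf3 0 w.2.2.1] at h4
      exact h4.symm
  have comm2' : ∀ w, D2 w = 0 → DZ2 (π2 w) = 0 := by
    intro w hw
    rw [comm2 w rfl, hw]
    rfl
  -- the two key constructions
  have inj_core : ∀ w, D2 w = 0 →
      ∀ u : SCochain I0 G0 ℤ 1 × SCochain I1 G1 ℤ 0,
      DZ1 u = (w.1.1.1, w.2.1.1.1, w.2.2.1.1) → ∃ v, D1 v = w := by
    rintro ⟨⟨⟨c0, h0, ω0⟩, hm0⟩, ⟨⟨c1, h1, ω1⟩, hm1⟩, ⟨⟨c2, hh2, ω2⟩, hm2⟩⟩ hw ⟨u0, u1⟩ hu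
    have hu' : DZ1 (u0, u1) = (c0, c1, c2) := hu
    obtain ⟨hA, hB, hC, hE⟩ :=
      hD2 (⟨(c0, h0, ω0), hm0⟩, ⟨(c1, h1, ω1), hm1⟩, ⟨(c2, hh2, ω2), hm2⟩)
    have hA' : dDC I0 G0 Ω0 hΩ0 1 2 ⟨(c0, h0, ω0), hm0⟩ = 0 := by rw [← hA, hw]; rfl
    have hB' : δT01 I0 G0 I1 G1 f1 hf1 2 (c0, h0, ω0)
        - (dDC I1 G1 Ω1 hΩ1 1 1 ⟨(c1, h1, ω1), hm1⟩).1 = 0 := by rw [← hB, hw]; rfl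
    have hC' : δT12 I1 G1 I2 G2 f2 hf2 1 (c1, h1, ω1)
        + (dDC I2 G2 Ω2 hΩ2 1 0 ⟨(c2, hh2, ω2), hm2⟩).1 = 0 := by rw [← hC, hw]; rfl
    -- memberships
    have hmω0 : ω0 ∈ Ω0 2 := hm0.1
    have hmω1 : ω1 ∈ Ω1 1 := hm1.1
    have hω2 : ω2 = 0 := hm2.2 (by norm_num)
    -- scalar consequences of the kernel equations
    have eA2 : ω0 - intToReal I0 G0 2 c0 - scd I0 G0 ℝ 1 (toSC h0) = 0 :=
      congrArg (fun z : DCgrp I0 G0 Ω0 1 3 => z.1.2.1) hA'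
    obtain ⟨eB1, eB2x, eB3x⟩ := (prod3_eq_iff _ _).mp hB'
    have eB2 : δR01 I0 G0 I1 G1 f1 hf1 1 (toSC h0)
        - (ω1 - intToReal I1 G1 1 c1 - scd I1 G1 ℝ 0 (toSC h1)) = 0 := eB2x
    have eB3 : δR01 I0 G0 I1 G1 f1 hf1 2 ω0 - scd I1 G1 ℝ 1 ω1 = 0 := eB3x
    obtain ⟨eC1, eC2x, eC3x⟩ := (prod3_eq_iff _ _).mp hC'
    have eC2 : δR12 I1 G1 I2 G2 f2 hf2 0 (toSC h1)
        + (ω2 - intToReal I2 G2 0 c2 - (0 : SCochain I2 G2 ℝ 0)) = 0 := eC2x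
    rw [hω2] at eC2
    -- consequences of `DZ1 u = π w`
    have hu1 : scd I0 G0 ℤ 1 u0 = c0 := by rw [← (hDZ1 (u0, u1)).1, hu']
    have hu2 : δZ01 I0 G0 I1 G1 f1 hf1 1 u0 - scd I1 G1 ℤ 0 u1 = c1 := by
      rw [← (hDZ1 (u0, u1)).2.1, hu']
    have hu3 : δZ12 I1 G1 I2 G2 f2 hf2 0 u1 = c2 := by rw [← (hDZ1 (u0, u1)).2.2, hu']
    -- Step 1: `d(h0 + u0) = ω0`, de Rham on `Γ0`
    have hA2 : ω0 = intToReal I0 G0 2 c0 + scd I0 G0 ℝ 1 (toSC h0) := by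
      have h : ω0 - (intToReal I0 G0 2 c0 + scd I0 G0 ℝ 1 (toSC h0)) = 0 := by
        rw [← eA2]; abel
      exact sub_eq_zero.mp h
    have hdA : scd I0 G0 ℝ 1 (toSC h0 + intToReal I0 G0 1 u0) = ω0 := by
      rw [map_add, ← intToReal_scd, hu1, hA2]
      abel
    have hdAmem : scd I0 G0 ℝ 1 (toSC h0 + intToReal I0 G0 1 u0) ∈ Ω0 2 := by
      rw [hdA]; exact hmω0
    obtain ⟨α, hαmem, b, hab⟩ := hDR0 0 (toSC h0 + intToReal I0 G0 1 u0) hdAmem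
    have hα : α = toSC h0 + intToReal I0 G0 1 u0 - scd I0 G0 ℝ 0 b := by rw [hab]; abel
    have hscdα : scd I0 G0 ℝ 1 α = ω0 := by
      rw [hα, map_sub, show scd I0 G0 ℝ 1 (scd I0 G0 ℝ 0 b) = 0 from scd_scd 0 b, sub_zero]
      exact hdA
    -- Step 2: the function `g` on `Γ1`
    have hdh1 : scd I1 G1 ℝ 0 (toSC h1)
        = ω1 - intToReal I1 G1 1 c1 - δR01 I0 G0 I1 G1 f1 hf1 1 (toSC h0) := by
      have h : scd I1 G1 ℝ 0 (toSC h1)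
          - (ω1 - intToReal I1 G1 1 c1 - δR01 I0 G0 I1 G1 f1 hf1 1 (toSC h0)) = 0 := by
        rw [← eB2]; abel
      exact sub_eq_zero.mp h
    have hscdu1 : scd I1 G1 ℤ 0 u1 = δZ01 I0 G0 I1 G1 f1 hf1 1 u0 - c1 := by
      rw [← hu2]; abel
    have hdg : scd I1 G1 ℝ 0
        (toSC h1 - intToReal I1 G1 0 u1 + δR01 I0 G0 I1 G1 f1 hf1 0 b)
        = ω1 - δR01 I0 G0 I1 G1 f1 hf1 1 α := by
      simp only [map_add, map_sub]
      rw [hdh1, ← intToReal_scd, hscdu1, map_sub (intToReal I1 G1 1),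
        intToReal_δZ01 I0 G0 I1 G1 f1 hf1,
        show scd I1 G1 ℝ 0 (δR01 I0 G0 I1 G1 f1 hf1 0 b)
            = δR01 I0 G0 I1 G1 f1 hf1 1 (scd I0 G0 ℝ 0 b) from
          (δR01_scd I0 G0 I1 G1 f1 hf1 0 b).symm,
        hα, map_sub, map_add]
      abel
    have hgmem : (toSC h1 - intToReal I1 G1 0 u1 + δR01 I0 G0 I1 G1 f1 hf1 0 b) ∈ Ω1 0 := by
      refine hDR1' _ ?_
      rw [hdg]
      exact sub_mem hmω1 (δR01_mem I0 G0 I1 G1 f1 hf1 Ω0 Ω1 hp1 1 α hαmem)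
    have e1 : δR12 I1 G1 I2 G2 f2 hf2 0 (toSC h1) = intToReal I2 G2 0 c2 := by
      have h : δR12 I1 G1 I2 G2 f2 hf2 0 (toSC h1) - intToReal I2 G2 0 c2 = 0 := by
        rw [← eC2]; abel
      exact sub_eq_zero.mp h
    have hδg : δR12 I1 G1 I2 G2 f2 hf2 0
        (toSC h1 - intToReal I1 G1 0 u1 + δR01 I0 G0 I1 G1 f1 hf1 0 b) = 0 := by
      simp only [map_add, map_sub]
      rw [δR12_δR01 I0 G0 I1 G1 I2 G2 f1 hf1 f2 hf2 hs1 hs2 hs3 0 b, e1,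
        ← intToReal_δZ12 I1 G1 I2 G2 f2 hf2, hu3]
      abel
    obtain ⟨y, hymem, hy⟩ := hvan1 _ hgmem hδg
    have hy' : δR01 I0 G0 I1 G1 f1 hf1 0 y
        = toSC h1 - intToReal I1 G1 0 u1 + δR01 I0 G0 I1 G1 f1 hf1 0 b := hy
    -- assemble the preimage
    refine ⟨(⟨(u0, y - b, α + scd I0 G0 ℝ 0 y),
        ⟨add_mem hαmem (hΩ0 0 y hymem), fun hlt => absurd hlt (by norm_num)⟩⟩,
      ⟨(u1, 0, 0), ⟨zero_mem _, fun _ => rfl⟩⟩), ?_⟩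
    obtain ⟨g1, g2, g3⟩ := hD1 (⟨(u0, y - b, α + scd I0 G0 ℝ 0 y), _⟩, ⟨(u1, 0, 0), _⟩)
    refine Prod.ext (Subtype.ext ?_) (Prod.ext (Subtype.ext ?_) (Subtype.ext ?_))
    · refine (congrArg Subtype.val g1).trans ?_
      refine Prod.ext ?_ (Prod.ext ?_ ?_)
      · exact hu1
      · show α + scd I0 G0 ℝ 0 y - intToReal I0 G0 1 u0 - scd I0 G0 ℝ 0 (y - b) = toSC h0
        rw [map_sub, hα]
        abel
      · show scd I0 G0 ℝ 1 (α + scd I0 G0 ℝ 0 y) = ω0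
        rw [map_add, show scd I0 G0 ℝ 1 (scd I0 G0 ℝ 0 y) = 0 from scd_scd 0 y, add_zero]
        exact hscdα
    · refine g2.trans ?_
      refine Prod.ext ?_ (Prod.ext ?_ ?_)
      · exact hu2
      · show δR01 I0 G0 I1 G1 f1 hf1 0 (y - b)
          - ((0 : SCochain I1 G1 ℝ 0) - intToReal I1 G1 0 u1 - 0) = toSC h1
        rw [map_sub, hy']
        abel
      · show δR01 I0 G0 I1 G1 f1 hf1 1 (α + scd I0 G0 ℝ 0 y) - scd I1 G1 ℝ 0 0 = ω1
        rw [map_zero, sub_zero, map_add,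
          show δR01 I0 G0 I1 G1 f1 hf1 1 (scd I0 G0 ℝ 0 y)
              = scd I1 G1 ℝ 0 (δR01 I0 G0 I1 G1 f1 hf1 0 y) from δR01_scd I0 G0 I1 G1 f1 hf1 0 y,
          hy', hdg]
        abel
    · refine g3.trans ?_
      refine Prod.ext ?_ (Prod.ext ?_ ?_)
      · rw [δT12_fst I1 G1 I2 G2 f2 hf2 0 (u1, 0, 0)]
        exact hu3
      · exact @Subsingleton.elim _ (inferInstanceAs (Subsingleton PUnit)) _ _
      · rw [δT12_snd2 I1 G1 I2 G2 f2 hf2 0 (u1, 0, 0)]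
        show δR12 I1 G1 I2 G2 f2 hf2 0 0 = ω2
        rw [map_zero, hω2]
  have surj_core : ∀ u : SCochain I0 G0 ℤ 2 × SCochain I1 G1 ℤ 1 × SCochain I2 G2 ℤ 0,
      DZ2 u = 0 → ∃ w, D2 w = 0 ∧ (w.1.1.1, w.2.1.1.1, w.2.2.1.1) = u := by
    rintro ⟨c0, c1, c2⟩ hu
    obtain ⟨z1, z2, z3, z4⟩ := hDZ2 (c0, c1, c2)
    have hz1 : scd I0 G0 ℤ 2 c0 = 0 := by rw [← z1, hu]; try rfl
    have hz2 : δZ01 I0 G0 I1 G1 f1 hf1 2 c0 - scd I1 G1 ℤ 1 c1 = 0 := by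
      rw [← z2, hu]; try rfl
    have hz3 : δZ12 I1 G1 I2 G2 f2 hf2 1 c1 + scd I2 G2 ℤ 0 c2 = 0 := by
      rw [← z3, hu]; try rfl
    have hz4 : δZ23 I2 G2 I3 G3 f3 hf3 0 c2 = 0 := by rw [← z4, hu]; try rfl
    have hscdc1 : scd I1 G1 ℤ 1 c1 = δZ01 I0 G0 I1 G1 f1 hf1 2 c0 := (sub_eq_zero.mp hz2).symm
    have hscdc2 : scd I2 G2 ℤ 0 c2 = -δZ12 I1 G1 I2 G2 f2 hf2 1 c1 := by
      have h : scd I2 G2 ℤ 0 c2 - (-δZ12 I1 G1 I2 G2 f2 hf2 1 c1) = 0 := by rw [← hz3]; abel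
      exact sub_eq_zero.mp h
    -- Step 1: de Rham on `Γ0` applied to the real cocycle `c0`
    have hda : scd I0 G0 ℝ 2 (intToReal I0 G0 2 c0) ∈ Ω0 3 := by
      rw [← intToReal_scd, hz1, map_zero]
      exact zero_mem _
    obtain ⟨α, hαmem, b, hab⟩ := hDR0 1 (intToReal I0 G0 2 c0) hda
    have hα : α = intToReal I0 G0 2 c0 - scd I0 G0 ℝ 1 b := by rw [hab]; abel
    have hscdα : scd I0 G0 ℝ 2 α = 0 := by
      rw [hα, map_sub, ← intToReal_scd, hz1, map_zero,
        show scd I0 G0 ℝ 2 (scd I0 G0 ℝ 1 b) = 0 from scd_scd 1 b, sub_zero]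
    -- Step 2: de Rham on `Γ1`
    have hda1 : scd I1 G1 ℝ 1
        (δR01 I0 G0 I1 G1 f1 hf1 1 (-b) + intToReal I1 G1 1 c1)
        = δR01 I0 G0 I1 G1 f1 hf1 2 α := by
      simp only [map_add, map_neg]
      rw [show scd I1 G1 ℝ 1 (δR01 I0 G0 I1 G1 f1 hf1 1 b)
            = δR01 I0 G0 I1 G1 f1 hf1 2 (scd I0 G0 ℝ 1 b) from
          (δR01_scd I0 G0 I1 G1 f1 hf1 1 b).symm,
        ← intToReal_scd, hscdc1, intToReal_δZ01 I0 G0 I1 G1 f1 hf1, hα, map_sub]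
      abel
    have hda1mem : scd I1 G1 ℝ 1
        (δR01 I0 G0 I1 G1 f1 hf1 1 (-b) + intToReal I1 G1 1 c1) ∈ Ω1 2 := by
      rw [hda1]
      exact δR01_mem I0 G0 I1 G1 f1 hf1 Ω0 Ω1 hp1 2 α hαmem
    obtain ⟨α1, hα1mem, b1, hab1⟩ :=
      hDR1 0 (δR01 I0 G0 I1 G1 f1 hf1 1 (-b) + intToReal I1 G1 1 c1) hda1mem
    have hα1 : α1 = δR01 I0 G0 I1 G1 f1 hf1 1 (-b) + intToReal I1 G1 1 c1
        - scd I1 G1 ℝ 0 b1 := by rw [hab1]; abel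
    have hscdα1 : scd I1 G1 ℝ 1 α1 = δR01 I0 G0 I1 G1 f1 hf1 2 α := by
      rw [hα1, map_sub,
        show scd I1 G1 ℝ 1 (scd I1 G1 ℝ 0 b1) = 0 from scd_scd 0 b1, sub_zero]
      exact hda1
    -- Step 3: the function `g` on `Γ2` and the correction `y`
    have hdg : scd I2 G2 ℝ 0
        (δR12 I1 G1 I2 G2 f2 hf2 0 (-b1) - intToReal I2 G2 0 c2)
        = δR12 I1 G1 I2 G2 f2 hf2 1 α1 := by
      rw [map_sub, ← intToReal_scd, hscdc2, map_neg (intToReal I2 G2 1),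
        intToReal_δZ12 I1 G1 I2 G2 f2 hf2,
        show scd I2 G2 ℝ 0 (δR12 I1 G1 I2 G2 f2 hf2 0 (-b1))
            = δR12 I1 G1 I2 G2 f2 hf2 1 (scd I1 G1 ℝ 0 (-b1)) from
          (δR12_scd I1 G1 I2 G2 f2 hf2 0 (-b1)).symm,
        show scd I1 G1 ℝ 0 (-b1) = α1
            - (δR01 I0 G0 I1 G1 f1 hf1 1 (-b) + intToReal I1 G1 1 c1) from by
          rw [map_neg (scd I1 G1 ℝ 0) b1, hα1]; abel,
        map_sub (δR12 I1 G1 I2 G2 f2 hf2 1), map_add (δR12 I1 G1 I2 G2 f2 hf2 1),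
        δR12_δR01 I0 G0 I1 G1 I2 G2 f1 hf1 f2 hf2 hs1 hs2 hs3 1 (-b)]
      abel
    have hgmem : (δR12 I1 G1 I2 G2 f2 hf2 0 (-b1) - intToReal I2 G2 0 c2) ∈ Ω2 0 := by
      refine hDR2' _ ?_
      rw [hdg]
      exact δR12_mem I1 G1 I2 G2 f2 hf2 Ω1 Ω2 hp2 1 α1 hα1mem
    have hδg : δR23 I2 G2 I3 G3 f3 hf3 0
        (δR12 I1 G1 I2 G2 f2 hf2 0 (-b1) - intToReal I2 G2 0 c2) = 0 := by
      rw [map_sub, δR23_δR12 I1 G1 I2 G2 I3 G3 f2 hf2 f3 hf3 hs4 hs5 hs6 hs7 hs8 hs9 0 (-b1),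
        ← intToReal_δZ23 I2 G2 I3 G3 f3 hf3, hz4, map_zero]
      abel
    obtain ⟨y, hymem, hy⟩ := hvan2 _ hgmem hδg
    have hy' : δR12 I1 G1 I2 G2 f2 hf2 0 y
        = δR12 I1 G1 I2 G2 f2 hf2 0 (-b1) - intToReal I2 G2 0 c2 := hy
    -- assemble the cocycle
    refine ⟨(⟨(c0, -b, α), ⟨hαmem, fun hlt => absurd hlt (by norm_num)⟩⟩,
      ⟨(c1, -b1 - y, α1 - scd I1 G1 ℝ 0 y),
        ⟨sub_mem hα1mem (hΩ1 0 y hymem), fun hlt => absurd hlt (by norm_num)⟩⟩,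
      ⟨(c2, 0, 0), ⟨zero_mem _, fun _ => rfl⟩⟩), ?_, rfl⟩
    obtain ⟨hA, hB, hC, hE⟩ := hD2 (⟨(c0, -b, α), _⟩,
      ⟨(c1, -b1 - y, α1 - scd I1 G1 ℝ 0 y), _⟩, ⟨(c2, 0, 0), _⟩)
    refine Prod.ext (Subtype.ext ?_) (Prod.ext (Subtype.ext ?_)
      (Prod.ext (Subtype.ext ?_) (Subtype.ext ?_)))
    · refine (congrArg Subtype.val hA).trans ?_
      refine Prod.ext ?_ (Prod.ext ?_ ?_)
      · exact hz1
      · show α - intToReal I0 G0 2 c0 - scd I0 G0 ℝ 1 (-b) = 0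
        rw [map_neg, hα]
        abel
      · show scd I0 G0 ℝ 2 α = 0
        exact hscdα
    · refine hB.trans ?_
      refine Prod.ext ?_ (Prod.ext ?_ ?_)
      · exact hz2
      · show δR01 I0 G0 I1 G1 f1 hf1 1 (-b)
          - (α1 - scd I1 G1 ℝ 0 y - intToReal I1 G1 1 c1 - scd I1 G1 ℝ 0 (-b1 - y)) = 0
        rw [hα1, map_sub (scd I1 G1 ℝ 0) (-b1) y, map_neg (scd I1 G1 ℝ 0) b1]
        abel
      · show δR01 I0 G0 I1 G1 f1 hf1 2 α - scd I1 G1 ℝ 1 (α1 - scd I1 G1 ℝ 0 y) = 0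
        rw [map_sub, show scd I1 G1 ℝ 1 (scd I1 G1 ℝ 0 y) = 0 from scd_scd 0 y, sub_zero,
          hscdα1]
        abel
    · refine hC.trans ?_
      refine Prod.ext ?_ (Prod.ext ?_ ?_)
      · show δZ12 I1 G1 I2 G2 f2 hf2 1 c1 + scd I2 G2 ℤ 0 c2 = 0
        exact hz3
      · show δR12 I1 G1 I2 G2 f2 hf2 0 (-b1 - y)
          + ((0 : SCochain I2 G2 ℝ 0) - intToReal I2 G2 0 c2 - 0) = 0
        rw [map_sub (δR12 I1 G1 I2 G2 f2 hf2 0), hy']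
        abel
      · show δR12 I1 G1 I2 G2 f2 hf2 1 (α1 - scd I1 G1 ℝ 0 y) + scd I2 G2 ℝ 0 0 = 0
        rw [map_zero, add_zero, map_sub,
          show δR12 I1 G1 I2 G2 f2 hf2 1 (scd I1 G1 ℝ 0 y)
              = scd I2 G2 ℝ 0 (δR12 I1 G1 I2 G2 f2 hf2 0 y) from
            δR12_scd I1 G1 I2 G2 f2 hf2 0 y,
          hy', hdg]
        abel
    · refine hE.trans ?_
      refine Prod.ext ?_ (Prod.ext ?_ ?_)
      · show δZ23 I2 G2 I3 G3 f3 hf3 0 c2 = 0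
        exact hz4
      · exact @Subsingleton.elim _ (inferInstanceAs (Subsingleton PUnit)) _ _
      · show δR23 I2 G2 I3 G3 f3 hf3 0 0 = 0
        rw [map_zero]
  -- assembling the isomorphism
  have hker : ∀ w : D2.ker, DZ2 (π2 w.1) = 0 := fun w => comm2' w.1 (AddMonoidHom.mem_ker.mp w.2)
  let P : D2.ker →+ DZ2.ker :=
    (π2.comp D2.ker.subtype).codRestrict DZ2.ker (fun w => AddMonoidHom.mem_ker.mpr (hker w))
  let φ : D2.ker →+ Hq DZ1 DZ2 :=
    (QuotientAddGroup.mk' (DZ1.range.addSubgroupOf DZ2.ker)).comp P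
  have hφzero : ∀ x ∈ D1.range.addSubgroupOf D2.ker, φ x = 0 := by
    intro x hx
    obtain ⟨v, hv⟩ := AddSubgroup.mem_addSubgroupOf.mp hx
    refine (QuotientAddGroup.eq_zero_iff (P x)).mpr ?_
    refine AddSubgroup.mem_addSubgroupOf.mpr ⟨π1 v, ?_⟩
    show DZ1 (π1 v) = π2 (x : _)
    rw [← comm1 v, hv]
  let e0 : Hq D1 D2 →+ Hq DZ1 DZ2 := QuotientAddGroup.lift _ φ hφzero
  have hinj : Function.Injective e0 := by
    rw [injective_iff_map_eq_zero]
    intro x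
    refine QuotientAddGroup.induction_on x ?_
    rintro ⟨w, hw⟩ hx0
    have hmem := (QuotientAddGroup.eq_zero_iff (P ⟨w, hw⟩)).mp hx0
    obtain ⟨u, hu⟩ := AddSubgroup.mem_addSubgroupOf.mp hmem
    obtain ⟨v, hv⟩ := inj_core w (AddMonoidHom.mem_ker.mp hw) u hu
    exact (QuotientAddGroup.eq_zero_iff _).mpr
      (AddSubgroup.mem_addSubgroupOf.mpr ⟨v, hv⟩)
  have hsurj : Function.Surjective e0 := by
    intro y
    refine QuotientAddGroup.induction_on y ?_
    rintro ⟨u, hu⟩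
    obtain ⟨w, hw0, hpw⟩ := surj_core u (AddMonoidHom.mem_ker.mp hu)
    refine ⟨QuotientAddGroup.mk (⟨w, AddMonoidHom.mem_ker.mpr hw0⟩ : D2.ker), ?_⟩
    show QuotientAddGroup.mk' (DZ1.range.addSubgroupOf DZ2.ker) (P ⟨w, _⟩)
      = QuotientAddGroup.mk ⟨u, hu⟩
    exact congrArg _ (Subtype.ext hpw)
  refine ⟨AddEquiv.ofBijective e0 ⟨hinj, hsurj⟩, ?_⟩
  intro w hw hw'
  show e0 (HqMk D1 D2 w hw) = HqMk DZ1 DZ2 _ hw'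
  exact congrArg _ (Subtype.ext rfl)


end Stmt17

end
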